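/- arXiv:1403.5739 — 3 statements merged into one kernel-verified Lean document; each statement's English description precedes it below -/
import Mathlib

section
/- For an odd prime D, if 2/D = 1/a + 1/b with positive integers a < b, then a = (D+1)/2 and b = D(D+1)/2. That is, the two-term unit fraction decomposition of 2/D with distinct denominators is unique. -/
theorem two_term_unique (D a b : ℕ) (hD : D.Prime) (hodd : Odd D)
    (ha : 0 < a) (hab : a < b)
    (h : (2 : ℚ) / D = 1 / a + 1 / b) :
    a = (D + 1) / 2 ∧ b = D * (D + 1) / 2 := by
  have hD0 : 0 < D := hD.pos
  have hb : 0 < b := ha.trans hab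
  have hDq : (D:ℚ) ≠ 0 := by exact_mod_cast hD0.ne'
  have haq : (a:ℚ) ≠ 0 := by exact_mod_cast ha.ne'
  have hbq : (b:ℚ) ≠ 0 := by exact_mod_cast hb.ne'
  have key : 2 * a * b = D * (a + b) := by
    have h' : (2 * a * b : ℚ) = D * (a + b) := by
      field_simp at h
      linarith [h]
    exact_mod_cast h'
  -- a < D
  have haD : a < D := by
    by_contra hc
    push_neg at hc
    nlinarith [key, hab, hb]
  -- D < 2a
  have hDa : D < 2 * a := by
    by_contra hc
    push_neg at hc
    nlinarith [key, hab, hb, ha]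
  set d := 2 * a - D with hdd
  have hd : d + D = 2 * a := by omega
  have key2 : d * b = D * a := by
    have h1 : (d + D) * b = D * a + D * b := by
      rw [hd]; nlinarith [key]
    nlinarith [h1]
  have hdpos : 0 < d := by omega
  have hdltD : d < D := by omega
  have hdvd : d ∣ D * a := ⟨b, key2.symm⟩
  have hcop : Nat.Coprime D d := (Nat.Prime.coprime_iff_not_dvd hD).mpr
    (fun hdd' => absurd (Nat.le_of_dvd hdpos hdd') (not_le.mpr hdltD))
  have hda : d ∣ a := (Nat.Coprime.dvd_of_dvd_mul_left hcop.symm) hdvd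
  have hdD : d ∣ D := by
    have h2a : d ∣ 2 * a := hda.mul_left 2
    have h3 := Nat.dvd_sub h2a (dvd_refl d)
    have he : 2 * a - d = D := by omega
    rwa [he] at h3
  have hd1 : d = 1 := (hD.eq_one_or_self_of_dvd d hdD).resolve_right (by omega)
  have hbval : b = D * a := by simpa [hd1] using key2
  have h2a : 2 * a = D + 1 := by omega
  constructor
  · omega
  · have : D * (D + 1) = 2 * b := by rw [← h2a, hbval]; ring
    omega
end

section
/- Let D be an odd positive integer and D₁ a positive integer, and let d₂, d₃ be positive divisors of D₁ such that 2·D₁ = D + d₂ + d₃. Then 2/D = 1/D₁ + 1/((D₁/d₂)·D) + 1/((D₁/d₃)·D). -/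
theorem three_term_scheme (D D₁ d₂ d₃ : ℕ) (hD : Odd D) (hDpos : 0 < D)
    (hD₁ : 0 < D₁) (hd₂ : 0 < d₂) (hd₃ : 0 < d₃)
    (hdvd₂ : d₂ ∣ D₁) (hdvd₃ : d₃ ∣ D₁)
    (hsum : 2 * D₁ = D + d₂ + d₃) :
    (2 : ℚ) / D = 1 / D₁ + 1 / ((D₁ / d₂ : ℕ) * D) + 1 / ((D₁ / d₃ : ℕ) * D) := by
  obtain ⟨a, ha⟩ := hdvd₂
  obtain ⟨b, hb⟩ := hdvd₃
  have ha' : D₁ / d₂ = a := by rw [ha, Nat.mul_div_cancel_left _ hd₂]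
  have hb' : D₁ / d₃ = b := by rw [hb, Nat.mul_div_cancel_left _ hd₃]
  have hapos : 0 < a := Nat.pos_of_ne_zero (by rintro rfl; simp at ha; omega)
  have hbpos : 0 < b := Nat.pos_of_ne_zero (by rintro rfl; simp at hb; omega)
  rw [ha', hb']
  have hDq : (D : ℚ) ≠ 0 := by positivity
  have hD₁q : (D₁ : ℚ) ≠ 0 := by positivity
  have haq : (a : ℚ) ≠ 0 := by exact_mod_cast hapos.ne'
  have hbq : (b : ℚ) ≠ 0 := by exact_mod_cast hbpos.ne'
  have hD₁a : (D₁ : ℚ) = d₂ * a := by exact_mod_cast ha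
  have hD₁b : (D₁ : ℚ) = d₃ * b := by exact_mod_cast hb
  have hs : (2 : ℚ) * D₁ = D + d₂ + d₃ := by exact_mod_cast hsum
  push_cast
  field_simp
  linear_combination ((a:ℚ)*b)*hs - (b:ℚ)*hD₁a - (a:ℚ)*hD₁b
end

section
/- Let D be an odd positive integer and D₁ a positive integer, and let d₂, d₃, d₄ be positive divisors of D₁ such that 2·D₁ = D + d₂ + d₃ + d₄. Then 2/D = 1/D₁ + 1/((D₁/d₂)·D) + 1/((D₁/d₃)·D) + 1/((D₁/d₄)·D). -/
theorem four_term_scheme (D D₁ d₂ d₃ d₄ : ℕ) (hD : Odd D) (hDpos : 0 < D)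
    (hD₁ : 0 < D₁) (hd₂ : 0 < d₂) (hd₃ : 0 < d₃) (hd₄ : 0 < d₄)
    (hdvd₂ : d₂ ∣ D₁) (hdvd₃ : d₃ ∣ D₁) (hdvd₄ : d₄ ∣ D₁)
    (hsum : 2 * D₁ = D + d₂ + d₃ + d₄) :
    (2 : ℚ) / D = 1 / D₁ + 1 / ((D₁ / d₂ : ℕ) * D) + 1 / ((D₁ / d₃ : ℕ) * D)
      + 1 / ((D₁ / d₄ : ℕ) * D) := by
  have h2 : ((D₁ / d₂ : ℕ) : ℚ) = (D₁ : ℚ) / d₂ := Nat.cast_div hdvd₂ (by positivity)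
  have h3 : ((D₁ / d₃ : ℕ) : ℚ) = (D₁ : ℚ) / d₃ := Nat.cast_div hdvd₃ (by positivity)
  have h4 : ((D₁ / d₄ : ℕ) : ℚ) = (D₁ : ℚ) / d₄ := Nat.cast_div hdvd₄ (by positivity)
  have hs : (2 : ℚ) * D₁ = D + d₂ + d₃ + d₄ := by exact_mod_cast hsum
  have hDq : (D : ℚ) ≠ 0 := by positivity
  have hD₁q : (D₁ : ℚ) ≠ 0 := by positivity
  have h2q : (d₂ : ℚ) ≠ 0 := by positivity
  have h3q : (d₃ : ℚ) ≠ 0 := by positivity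
  have h4q : (d₄ : ℚ) ≠ 0 := by positivity
  rw [h2, h3, h4]
  field_simp
  ring_nf
  nlinarith [hs]
end
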